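/- For every real k > 4/3, there do not exist sequences (x_j)_{j∈ℤ} in ℝ and (ℓ_j)_{j∈ℤ} in ℝ with ℓ_j > 0 for all j, ℓ_{j+1} = (2 − k·cos(2π·x_j)) − 1/ℓ_j for all j, and x_{j₀} ∈ ℤ for some index j₀. (This is the 'Mather 4/3' criterion applied to the standard map: for k > 4/3 no invariant circle crosses the vertical line x = 0, so k_c ≤ 4/3.) -/

import Mathlib

/-- Key lemma: if `a n > 0` for all `n` and `a (n+1) ≤ (p+q) - 1/(a n)` with
`0 < p ≤ q`, `p*q = 1`, then `a 0 ≥ p`. -/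
lemma stmt5_key (p q : ℝ) (hp : 0 < p) (hpq : p ≤ q) (hprod : p * q = 1)
    (a : ℕ → ℝ) (hpos : ∀ n, 0 < a n)
    (hrec : ∀ n, a (n + 1) ≤ (p + q) - 1 / a n) : p ≤ a 0 := by
  by_contra h
  push_neg at h
  set δ : ℝ := (p - a 0) * (q - a 0) / a 0 with hδdef
  have h0 := hpos 0
  have hδ : 0 < δ := by
    apply div_pos _ h0
    have : a 0 < q := lt_of_lt_of_le h hpq
    nlinarith
  have hmono : ∀ n, a n ≤ a 0 - n * δ := by
    intro n
    induction n with
    | zero => simp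
    | succ n ih =>
      have hn := hpos n
      have han : a n ≤ a 0 := le_trans ih (by nlinarith [Nat.cast_nonneg (α := ℝ) n])
      have hinv : (1 / a n) * a n = 1 := by field_simp
      have hδa : δ * a 0 = (p - a 0) * (q - a 0) := by
        rw [hδdef, div_mul_cancel₀ _ (ne_of_gt h0)]
      have step : a (n + 1) ≤ a n - δ := by
        have h1 := hrec n
        have e1 : (p - a 0) * (q - a 0) ≤ (p - a n) * (q - a n) := by nlinarith
        -- want: (p+q) - 1/(a n) ≤ a n - δ
        have e2 : (p + q) - 1 / a n ≤ a n - δ := by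
          have e3 : ((p + q) - 1 / a n) * a n ≤ (a n - δ) * a n := by
            nlinarith [mul_le_mul_of_nonneg_left han hδ.le]
          exact le_of_mul_le_mul_right e3 hn
        linarith
      push_cast
      linarith
  obtain ⟨n, hn⟩ := exists_nat_gt (a 0 / δ)
  have h1 := hmono n
  have h2 := hpos n
  have : a 0 / δ * δ < n * δ := by
    apply mul_lt_mul_of_pos_right hn hδ
  rw [div_mul_cancel₀ _ (ne_of_gt hδ)] at this
  linarith

/-- The "Mather 4/3" criterion for the standard map: for every `k > 4/3`,
there are no sequences `(x_j)` and `(ℓ_j)` with all `ℓ_j > 0`,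
`ℓ_{j+1} = (2 − k cos(2π x_j)) − 1/ℓ_j`, and `x_{j₀} ∈ ℤ` for some index `j₀`. -/
theorem stmt5 (k : ℝ) (hk : 4 / 3 < k) :
    ¬ ∃ (x ℓ : ℤ → ℝ), (∀ j, 0 < ℓ j) ∧
      (∀ j, ℓ (j + 1) = (2 - k * Real.cos (2 * Real.pi * x j)) - 1 / ℓ j) ∧
      (∃ (j₀ : ℤ) (m : ℤ), x j₀ = (m : ℝ)) := by
  rintro ⟨x, ℓ, hpos, hrec, j₀, m, hm⟩
  have hk0 : (0 : ℝ) < k := by linarith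
  -- β j ≤ 2 + k always
  have hβ : ∀ j : ℤ, 2 - k * Real.cos (2 * Real.pi * x j) ≤ 2 + k := by
    intro j
    nlinarith [Real.neg_one_le_cos (2 * Real.pi * x j)]
  -- the roots p ≤ q of t² - (2+k)t + 1
  set D : ℝ := Real.sqrt (k ^ 2 + 4 * k) with hDdef
  have hD0 : 0 ≤ D := Real.sqrt_nonneg _
  have hD2 : D ^ 2 = k ^ 2 + 4 * k := Real.sq_sqrt (by nlinarith)
  have hDlt : D < 2 + k := by nlinarith
  set p : ℝ := ((2 + k) - D) / 2 with hpdef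
  set q : ℝ := ((2 + k) + D) / 2 with hqdef
  have hp : 0 < p := by rw [hpdef]; linarith
  have hpq : p ≤ q := by rw [hpdef, hqdef]; linarith
  have hprod : p * q = 1 := by
    rw [hpdef, hqdef]; nlinarith
  have hsum : p + q = 2 + k := by rw [hpdef, hqdef]; ring
  -- forward sequence
  have hfwd : p ≤ ℓ (j₀ + 1) := by
    have := stmt5_key p q hp hpq hprod (fun n => ℓ (j₀ + 1 + n))
      (fun n => hpos _) (fun n => by
        have h1 := hrec (j₀ + 1 + n)
        have h2 := hβ (j₀ + 1 + n)
        have : ((n : ℤ) + 1 : ℤ) = (((n + 1 : ℕ) : ℤ)) := by push_cast; ring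
        calc ℓ (j₀ + 1 + ((n + 1 : ℕ) : ℤ))
            = ℓ (j₀ + 1 + (n : ℤ) + 1) := by congr 1; push_cast; ring
          _ = (2 - k * Real.cos (2 * Real.pi * x (j₀ + 1 + n))) - 1 / ℓ (j₀ + 1 + n) := h1
          _ ≤ (p + q) - 1 / ℓ (j₀ + 1 + n) := by rw [hsum]; linarith)
    simpa using this
  -- backward sequence
  have hbwd : p ≤ 1 / ℓ j₀ := by
    have := stmt5_key p q hp hpq hprod (fun n => 1 / ℓ (j₀ - n))
      (fun n => one_div_pos.mpr (hpos _)) (fun n => by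
        have h1 := hrec (j₀ - n - 1)
        have h2 := hβ (j₀ - n - 1)
        have e0 : j₀ - n - 1 + 1 = j₀ - n := by ring
        rw [e0] at h1
        have e1 : (j₀ - ((n + 1 : ℕ) : ℤ)) = j₀ - n - 1 := by push_cast; ring
        have e2 : (1 : ℝ) / (1 / ℓ (j₀ - n)) = ℓ (j₀ - n) := one_div_one_div _
        calc (1 : ℝ) / ℓ (j₀ - ((n + 1 : ℕ) : ℤ))
            = 1 / ℓ (j₀ - n - 1) := by rw [e1]
          _ = (2 - k * Real.cos (2 * Real.pi * x (j₀ - n - 1))) - ℓ (j₀ - n) := by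
              rw [h1]; ring
          _ ≤ (p + q) - 1 / (1 / ℓ (j₀ - n)) := by rw [hsum, e2]; linarith)
    simpa using this
  -- the crossing relation at j₀
  have hcos : Real.cos (2 * Real.pi * x j₀) = 1 := by
    rw [hm]
    have : 2 * Real.pi * (m : ℝ) = (m : ℝ) * (2 * Real.pi) := by ring
    rw [this, Real.cos_int_mul_two_pi]
  have hcross : ℓ (j₀ + 1) = (2 - k) - 1 / ℓ j₀ := by
    have := hrec j₀
    rw [hcos] at this
    linarith [this]
  -- conclude
  have : 2 * p ≤ 2 - k := by
    have := hpos j₀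
    linarith [hfwd, hbwd]
  rw [hpdef] at this
  nlinarith
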